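/- With the notation of the Uvarov modification, the kernels of the modified family satisfy $\tilde K_k(t,u) = K_k(t,u) - \frac{M K_k(1,t) K_k(1,u)}{1+M K_k(1,1)}$, where $\tilde K_k(t,u)=\sum_{j=0}^k q_j(t)q_j(u)/\tilde h_j$. -/

import Mathlib

open MeasureTheory Polynomial

lemma uvarov_expand_aux (p : ℕ → Polynomial ℝ) (hdeg : ∀ k, (p k).natDegree = k)
    (hcoeff : ∀ k, (p k).coeff k ≠ 0) :
    ∀ n (r : Polynomial ℝ), r.natDegree ≤ n →
      ∃ c : ℕ → ℝ, r = ∑ j ∈ Finset.range (n + 1), Polynomial.C (c j) * p j := by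
  intro n
  induction n with
  | zero =>
    intro r hr
    refine ⟨fun _ => r.coeff 0 / (p 0).coeff 0, ?_⟩
    rw [Finset.sum_range_one]
    have h0 : p 0 = C ((p 0).coeff 0) := eq_C_of_natDegree_le_zero (le_of_eq (hdeg 0))
    have hr0 : r = C (r.coeff 0) := eq_C_of_natDegree_le_zero hr
    show r = C (r.coeff 0 / (p 0).coeff 0) * p 0
    have h1 : C (r.coeff 0 / (p 0).coeff 0) * p 0
        = C (r.coeff 0 / (p 0).coeff 0) * C ((p 0).coeff 0) := by rw [← h0]
    rw [h1, ← C_mul, div_mul_cancel₀ _ (hcoeff 0)]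
    exact hr0
  | succ n ih =>
    intro r hr
    set a := r.coeff (n + 1) / (p (n + 1)).coeff (n + 1) with ha
    have hsub : (r - C a * p (n + 1)).natDegree ≤ n := by
      rw [natDegree_le_iff_coeff_eq_zero]
      intro m hm
      rcases eq_or_lt_of_le (Nat.succ_le_of_lt hm) with h1 | h1
      · rw [coeff_sub, coeff_C_mul, ← h1, ha,
          div_mul_cancel₀ _ (hcoeff (n + 1)), sub_self]
      · rw [coeff_sub, coeff_C_mul,
          coeff_eq_zero_of_natDegree_lt (lt_of_le_of_lt hr h1),
          coeff_eq_zero_of_natDegree_lt (by rw [hdeg]; exact h1),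
          mul_zero, sub_zero]
    obtain ⟨c, hc⟩ := ih _ hsub
    refine ⟨fun j => if j = n + 1 then a else c j, ?_⟩
    rw [Finset.sum_range_succ]
    have he : ∑ j ∈ Finset.range (n + 1), C (if j = n + 1 then a else c j) * p j
        = ∑ j ∈ Finset.range (n + 1), C (c j) * p j :=
      Finset.sum_congr rfl (fun j hj => by
        rw [if_neg (by have := Finset.mem_range.mp hj; omega)])
    rw [he, show (fun j => if j = n + 1 then a else c j) (n + 1) = a from by simp, ← hc]
    ring

lemma uvarov_lin (μ : Measure ℝ)
    (hint : ∀ r : Polynomial ℝ, Integrable (fun t => r.eval t) μ)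
    (s : Finset ℕ) (F : ℕ → ℝ) (G : ℕ → Polynomial ℝ) (g : Polynomial ℝ) :
    ∫ x, (∑ j ∈ s, Polynomial.C (F j) * G j).eval x * g.eval x ∂μ
      = ∑ j ∈ s, F j * ∫ x, (G j).eval x * g.eval x ∂μ := by
  have e : (fun x => (∑ j ∈ s, Polynomial.C (F j) * G j).eval x * g.eval x)
      = fun x => ∑ j ∈ s, F j * ((G j).eval x * g.eval x) := by
    funext x
    rw [eval_finset_sum, Finset.sum_mul]
    exact Finset.sum_congr rfl fun j _ => by simp [mul_assoc]
  rw [e, integral_finset_sum]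
  · exact Finset.sum_congr rfl fun j _ => integral_const_mul _ _
  · intro j _
    apply Integrable.const_mul
    simpa using hint (G j * g)

theorem uvarov_kernels
    (μ : Measure ℝ)
    (hsupp : μ (Set.Icc (-1 : ℝ) 1)ᶜ = 0)
    (hint : ∀ r : Polynomial ℝ, Integrable (fun t => r.eval t) μ)
    (p : ℕ → Polynomial ℝ)
    (hdeg : ∀ k, (p k).natDegree = k)
    (horth : ∀ j k, j ≠ k → ∫ t, (p j).eval t * (p k).eval t ∂μ = 0)
    (h : ℕ → ℝ)
    (hh : ∀ k, h k = ∫ t, ((p k).eval t) ^ 2 ∂μ)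
    (hpos : ∀ k, 0 < h k)
    (M : ℝ) (hM : 0 < M)
    (q : ℕ → Polynomial ℝ)
    (hqdeg : ∀ k, (q k).natDegree = k)
    (hqlead : ∀ k, (q k).leadingCoeff = (p k).leadingCoeff)
    (hqorth : ∀ k, ∀ r : Polynomial ℝ, r.degree < (k : ℕ) →
      (∫ t, (q k).eval t * r.eval t ∂μ) + M * (q k).eval 1 * r.eval 1 = 0)
    (th : ℕ → ℝ)
    (hth : ∀ k, th k = (∫ t, ((q k).eval t) ^ 2 ∂μ) + M * ((q k).eval 1) ^ 2)
    (k : ℕ) :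
    ∀ t u : ℝ,
      ∑ j ∈ Finset.range (k + 1), (q j).eval t * (q j).eval u / th j =
        (∑ j ∈ Finset.range (k + 1), (p j).eval t * (p j).eval u / h j) -
          M * (∑ j ∈ Finset.range (k + 1), (p j).eval 1 * (p j).eval t / h j) *
              (∑ j ∈ Finset.range (k + 1), (p j).eval 1 * (p j).eval u / h j) /
            (1 + M * ∑ j ∈ Finset.range (k + 1), ((p j).eval 1) ^ 2 / h j) := by
  intro t u
  have lin := uvarov_lin μ hint
  -- leading coefficients are nonzero
  have hpc : ∀ j, (p j).coeff j ≠ 0 := by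
    intro j
    have hne : p j ≠ 0 := by
      intro h0
      have := hpos j
      rw [hh j] at this
      simp [h0] at this
    have e : (p j).coeff j = (p j).leadingCoeff := by
      rw [Polynomial.leadingCoeff, hdeg]
    rw [e]
    exact Polynomial.leadingCoeff_ne_zero.mpr hne
  have hqc : ∀ j, (q j).coeff j ≠ 0 := by
    intro j
    have e1 : (q j).coeff j = (q j).leadingCoeff := by rw [Polynomial.leadingCoeff, hqdeg]
    have e2 : (p j).coeff j = (p j).leadingCoeff := by rw [Polynomial.leadingCoeff, hdeg]
    rw [e1, hqlead, ← e2]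
    exact hpc j
  have hexp := uvarov_expand_aux p hdeg hpc
  have hqexp := uvarov_expand_aux q hqdeg hqc
  -- orthogonality with delta
  have hdelta : ∀ i j : ℕ, ∫ x, (p i).eval x * (p j).eval x ∂μ = if i = j then h i else 0 := by
    intro i j
    by_cases hij : i = j
    · subst hij
      rw [if_pos rfl, hh]
      have e : (fun x => (p i).eval x * (p i).eval x) = fun x => ((p i).eval x) ^ 2 :=
        funext fun x => (sq _).symm
      rw [e]
    · rw [if_neg hij]
      exact horth i j hij
  -- key: integral of p j against an expanded polynomial
  have key : ∀ (g : Polynomial ℝ) (n : ℕ) (c : ℕ → ℝ),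
      g = ∑ i ∈ Finset.range (n + 1), Polynomial.C (c i) * p i →
      ∀ j ∈ Finset.range (n + 1), ∫ x, (p j).eval x * g.eval x ∂μ = c j * h j := by
    intro g n c hg j hj
    have e : (fun x => (p j).eval x * g.eval x) = fun x => g.eval x * (p j).eval x :=
      funext fun x => mul_comm _ _
    rw [e]
    conv_lhs => rw [hg]
    rw [lin]
    rw [Finset.sum_congr rfl fun i _ => by rw [hdelta i j]]
    simp [Finset.sum_ite_eq', hj]
  -- reproducing property
  have repro : ∀ (w : ℝ) (r : Polynomial ℝ), r.natDegree ≤ k →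
      ∫ x, (∑ j ∈ Finset.range (k + 1), Polynomial.C ((p j).eval w / h j) * p j).eval x
        * r.eval x ∂μ = r.eval w := by
    intro w r hr
    obtain ⟨c, hc⟩ := hexp k r hr
    rw [lin]
    rw [Finset.sum_congr rfl fun j hj => by rw [key r k c hc j hj]]
    conv_rhs => rw [hc]
    rw [eval_finset_sum]
    refine Finset.sum_congr rfl fun j _ => ?_
    have hj0 := (hpos j).ne'
    simp only [eval_mul, eval_C]
    field_simp
  -- positivity of the modified norms
  have hthpos : ∀ j, 0 < th j := by
    intro j
    obtain ⟨c, hc⟩ := hexp j (q j) (le_of_eq (hqdeg j))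
    have hcj : c j = 1 := by
      have h1 := congrArg (fun r : Polynomial ℝ => r.coeff j) hc
      simp only [finset_sum_coeff, coeff_C_mul] at h1
      rw [Finset.sum_range_succ] at h1
      rw [Finset.sum_eq_zero (fun i hi => by
        rw [coeff_eq_zero_of_natDegree_lt (by rw [hdeg]; exact Finset.mem_range.mp hi),
          mul_zero]), zero_add] at h1
      have h2 : (q j).coeff j = (p j).coeff j := by
        have e1 : (q j).coeff j = (q j).leadingCoeff := by rw [Polynomial.leadingCoeff, hqdeg]
        have e2 : (p j).coeff j = (p j).leadingCoeff := by rw [Polynomial.leadingCoeff, hdeg]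
        rw [e1, e2, hqlead]
      rw [h2] at h1
      have := mul_right_cancel₀ (hpc j) (h1.symm.trans (one_mul ((p j).coeff j)).symm)
      exact this
    have hsq : ∫ x, ((q j).eval x) ^ 2 ∂μ = ∑ i ∈ Finset.range (j + 1), c i ^ 2 * h i := by
      have e : (fun x => ((q j).eval x) ^ 2) = fun x => (q j).eval x * (q j).eval x :=
        funext fun x => sq _
      rw [e]
      have e2 : (fun x => (q j).eval x * (q j).eval x)
          = fun x => (∑ i ∈ Finset.range (j + 1), Polynomial.C (c i) * p i).eval x
            * (q j).eval x := by rw [← hc]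
      rw [e2, lin]
      refine Finset.sum_congr rfl fun i hi => ?_
      have e3 : (fun x => (p i).eval x * (q j).eval x) = fun x => (p i).eval x * (q j).eval x :=
        rfl
      rw [key (q j) j c hc i hi]
      ring
    rw [hth, hsq]
    have hge : h j ≤ ∑ i ∈ Finset.range (j + 1), c i ^ 2 * h i := by
      have := Finset.single_le_sum (f := fun i => c i ^ 2 * h i)
        (fun i _ => mul_nonneg (sq_nonneg _) (hpos i).le) (Finset.self_mem_range_succ j)
      simpa [hcj] using this
    nlinarith [hpos j, mul_nonneg hM.le (sq_nonneg ((q j).eval 1))]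
  -- orthogonality of the q family for the modified inner product
  have hqdelta : ∀ i j : ℕ,
      (∫ x, (q i).eval x * (q j).eval x ∂μ) + M * (q i).eval 1 * (q j).eval 1
        = if i = j then th i else 0 := by
    intro i j
    rcases lt_trichotomy i j with hij | rfl | hij
    · rw [if_neg hij.ne]
      have hdlt : (q i).degree < (j : ℕ) :=
        lt_of_le_of_lt degree_le_natDegree (by rw [hqdeg]; exact_mod_cast hij)
      have h0 := hqorth j (q i) hdlt
      have e : (fun x => (q i).eval x * (q j).eval x)
          = fun x => (q j).eval x * (q i).eval x := funext fun x => mul_comm _ _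
      rw [e]
      linear_combination h0
    · rw [if_pos rfl, hth]
      have e : (fun x => (q i).eval x * (q i).eval x) = fun x => ((q i).eval x) ^ 2 :=
        funext fun x => (sq _).symm
      rw [e]
      ring
    · rw [if_neg hij.ne']
      have hdlt : (q j).degree < (i : ℕ) :=
        lt_of_le_of_lt degree_le_natDegree (by rw [hqdeg]; exact_mod_cast hij)
      exact hqorth i (q j) hdlt
  -- abbreviations
  set K1t := ∑ j ∈ Finset.range (k + 1), (p j).eval 1 * (p j).eval t / h j with hK1t
  set K1u := ∑ j ∈ Finset.range (k + 1), (p j).eval 1 * (p j).eval u / h j with hK1u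
  set K11 := ∑ j ∈ Finset.range (k + 1), ((p j).eval 1) ^ 2 / h j with hK11
  have hK11nn : 0 ≤ K11 :=
    Finset.sum_nonneg fun j _ => div_nonneg (sq_nonneg _) (hpos j).le
  have hD : (0 : ℝ) < 1 + M * K11 := by nlinarith
  set cu := M * K1u / (1 + M * K11) with hcu
  set e : ℕ → ℝ := fun j => ((p j).eval u - cu * (p j).eval 1) / h j with hce
  -- the combination polynomial
  have hRdeg : (∑ j ∈ Finset.range (k + 1), Polynomial.C (e j) * p j).natDegree ≤ k :=
    natDegree_sum_le_of_forall_le _ _ fun j hj =>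
      le_trans (natDegree_C_mul_le _ _)
        (by rw [hdeg]; exact Nat.lt_succ_iff.mp (Finset.mem_range.mp hj))
  obtain ⟨d, hd⟩ := hqexp k _ hRdeg
  -- way 2: integral of R against q i via the reproducing property
  have hI : ∀ i ∈ Finset.range (k + 1),
      ∫ x, (∑ j ∈ Finset.range (k + 1), Polynomial.C (e j) * p j).eval x * (q i).eval x ∂μ
        = (q i).eval u - cu * (q i).eval 1 := by
    intro i hi
    have hqk : (q i).natDegree ≤ k := by
      rw [hqdeg]; exact Nat.lt_succ_iff.mp (Finset.mem_range.mp hi)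
    have h1 := repro u (q i) hqk
    have h2 := repro 1 (q i) hqk
    rw [lin] at h1 h2 ⊢
    rw [← h1, ← h2, Finset.mul_sum, ← Finset.sum_sub_distrib]
    refine Finset.sum_congr rfl fun j _ => ?_
    simp only [hce]
    have := (hpos j).ne'
    field_simp
  -- R evaluated at 1
  have hR1 : (∑ j ∈ Finset.range (k + 1), Polynomial.C (e j) * p j).eval 1
      = K1u - cu * K11 := by
    rw [eval_finset_sum, hK1u, hK11, Finset.mul_sum, ← Finset.sum_sub_distrib]
    refine Finset.sum_congr rfl fun j _ => ?_
    simp only [eval_mul, eval_C, hce]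
    ring
  -- way 1: integral of R against q i via the q-expansion
  have way1 : ∀ i ∈ Finset.range (k + 1),
      (∫ x, (∑ j ∈ Finset.range (k + 1), Polynomial.C (e j) * p j).eval x
          * (q i).eval x ∂μ)
        + M * (∑ j ∈ Finset.range (k + 1), Polynomial.C (e j) * p j).eval 1 * (q i).eval 1
        = d i * th i := by
    intro i hi
    rw [hd, lin, eval_finset_sum]
    have e1 : M * (∑ j ∈ Finset.range (k + 1), (Polynomial.C (d j) * q j).eval 1)
        * (q i).eval 1
        = ∑ j ∈ Finset.range (k + 1), d j * (M * (q j).eval 1 * (q i).eval 1) := by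
      simp only [eval_mul, eval_C]
      rw [Finset.mul_sum, Finset.sum_mul]
      exact Finset.sum_congr rfl fun j _ => by ring
    rw [e1, ← Finset.sum_add_distrib]
    rw [Finset.sum_congr rfl (fun j _ => by
      rw [← mul_add, hqdelta j i])]
    simp [Finset.sum_ite_eq', hi]
  -- the coefficients d
  have hcuD : cu * (1 + M * K11) = M * K1u := by
    rw [hcu]
    field_simp
  have hdi : ∀ i ∈ Finset.range (k + 1), d i = (q i).eval u / th i := by
    intro i hi
    have h1 := way1 i hi
    rw [hI i hi, hR1] at h1
    have h3 : d i * th i = (q i).eval u := by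
      linear_combination h1.symm - (q i).eval 1 * hcuD
    rw [eq_div_iff (hthpos i).ne']
    exact h3
  -- conclude
  have hRt := congrArg (fun r : Polynomial ℝ => r.eval t) hd
  simp only [eval_finset_sum, eval_mul, eval_C] at hRt
  calc ∑ j ∈ Finset.range (k + 1), (q j).eval t * (q j).eval u / th j
      = ∑ j ∈ Finset.range (k + 1), d j * (q j).eval t := by
        refine Finset.sum_congr rfl fun j hj => ?_
        rw [hdi j hj]
        ring
    _ = ∑ j ∈ Finset.range (k + 1), e j * (p j).eval t := hRt.symm
    _ = (∑ j ∈ Finset.range (k + 1), (p j).eval t * (p j).eval u / h j)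
        - cu * K1t := by
        rw [hK1t, Finset.mul_sum, ← Finset.sum_sub_distrib]
        refine Finset.sum_congr rfl fun j _ => ?_
        simp only [hce]
        ring
    _ = (∑ j ∈ Finset.range (k + 1), (p j).eval t * (p j).eval u / h j)
        - M * K1t * K1u / (1 + M * K11) := by
        rw [hcu]
        ring
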